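/- For every integer d ≥ 1 and every integer k ≥ 1, there exists a finite set P ⊂ ℝ^d with |P| = 2dk points such that for every point p ∈ P there exists an axis-parallel box B in ℝ^d with p ∉ B and |B ∩ P| ≥ (2d−1)k, i.e., B contains at least a ((2d−1)/(2d))-fraction of the points of P while avoiding p. Hence the constant (2d−1)/(2d) in the strong centerpoint theorem for axis-parallel boxes is tight. -/

import Mathlib

/-- An axis-parallel box in ℝ^d: a product of closed intervals. -/
def IsBox {d : ℕ} (B : Set (EuclideanSpace ℝ (Fin d))) : Prop :=
  ∃ a b : Fin d → ℝ, B = {x | ∀ i, a i ≤ x i ∧ x i ≤ b i}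

/-- Tightness of the strong centerpoint bound for axis-parallel boxes: there is a set of
`2dk` points such that every point of it is avoided by some axis-parallel box containing
at least `(2d-1)k` of the points. -/
theorem strong_centerpoint_boxes_tight (d k : ℕ) (hd : 1 ≤ d) (hk : 1 ≤ k) :
    ∃ P : Finset (EuclideanSpace ℝ (Fin d)), P.card = 2 * d * k ∧
      ∀ p ∈ P, ∃ B : Set (EuclideanSpace ℝ (Fin d)), IsBox B ∧ p ∉ B ∧
        (2 * d - 1) * k ≤ (B ∩ ↑P).ncard := by
  classical
  set f : Fin d × Bool × Fin k → EuclideanSpace ℝ (Fin d) :=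
    fun q => WithLp.toLp 2 (fun l => if l = q.1 then (if q.2.1 then ((q.2.2 : ℝ) + 1) else -((q.2.2 : ℝ) + 1)) else 0)
    with hf
  have hval : ∀ q : Fin d × Bool × Fin k, ∀ l,
      f q l = if l = q.1 then (if q.2.1 then ((q.2.2 : ℝ) + 1) else -((q.2.2 : ℝ) + 1)) else 0 :=
    fun q l => rfl
  have hpos : ∀ j : Fin k, (0:ℝ) < (j:ℝ) + 1 := by
    intro j; positivity
  have hle : ∀ j : Fin k, (j:ℝ) + 1 ≤ (k:ℝ) := by
    intro j
    have : (j:ℕ) + 1 ≤ k := j.2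
    exact_mod_cast this
  have hinj : Function.Injective f := by
    rintro ⟨i, s, j⟩ ⟨i', s', j'⟩ h
    have hi : i = i' := by
      by_contra hne
      have := congrArg (fun x : EuclideanSpace ℝ (Fin d) => x i) h
      rw [hval, hval] at this
      simp only [if_pos rfl, if_neg hne] at this
      cases s with
      | true => simp at this; nlinarith [hpos j]
      | false => simp at this; nlinarith [hpos j]
    subst hi
    have := congrArg (fun x : EuclideanSpace ℝ (Fin d) => x i) h
    rw [hval, hval] at this
    simp only [if_pos rfl] at this
    have hs : s = s' := by
      by_contra hne
      cases s <;> cases s' <;> simp_all <;> nlinarith [hpos j, hpos j']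
    subst hs
    have hj : j = j' := by
      cases s <;> simp at this <;>
        · have : (j:ℕ) = (j':ℕ) := by exact_mod_cast this
          exact Fin.ext this
    simp [hj]
  refine ⟨Finset.univ.image f, ?_, ?_⟩
  · rw [Finset.card_image_of_injective _ hinj]
    simp [Fintype.card_prod]
    ring
  · intro p hp
    simp only [Finset.mem_image, Finset.mem_univ, true_and] at hp
    obtain ⟨⟨i, s, j⟩, hpf⟩ := hp
    set a : Fin d → ℝ := fun l => if l = i then (if s then -(k:ℝ) else 0) else -(k:ℝ) with ha
    set b : Fin d → ℝ := fun l => if l = i then (if s then 0 else (k:ℝ)) else (k:ℝ) with hb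
    refine ⟨{x | ∀ l, a l ≤ x l ∧ x l ≤ b l}, ⟨a, b, rfl⟩, ?_, ?_⟩
    · intro hpB
      have := hpB i
      rw [← hpf] at this
      rw [hval] at this
      simp only [if_pos rfl, ha, hb] at this
      cases s with
      | true => simp at this; nlinarith [hpos j]
      | false => simp at this; nlinarith [hpos j]
    · set Q : Finset (Fin d × Bool × Fin k) :=
        Finset.univ.filter (fun q => ¬(q.1 = i ∧ q.2.1 = s)) with hQ
      have hsub : ↑(Q.image f) ⊆
          {x : EuclideanSpace ℝ (Fin d) | ∀ l, a l ≤ x l ∧ x l ≤ b l} ∩ ↑(Finset.univ.image f) := by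
        intro x hx
        simp only [Finset.coe_image, Set.mem_image, Finset.mem_coe] at hx
        obtain ⟨q, hqQ, rfl⟩ := hx
        rw [hQ, Finset.mem_filter] at hqQ
        constructor
        · intro l
          rw [hval]
          by_cases hl : l = q.1
          · rw [if_pos hl]
            have hjb := hle q.2.2
            have hjp := hpos q.2.2
            by_cases hli : l = i
            · have hqi : q.1 = i := hl ▸ hli
              have hsne : q.2.1 ≠ s := fun hh => hqQ.2 ⟨hqi, hh⟩
              simp only [ha, hb, if_pos hli]
              cases hs : s with
              | true =>
                have : q.2.1 = false := by
                  cases hq2 : q.2.1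
                  · rfl
                  · exact absurd (hq2.trans hs.symm) hsne
                rw [this]
                constructor <;> simp <;> linarith
              | false =>
                have : q.2.1 = true := by
                  cases hq2 : q.2.1
                  · exact absurd (hq2.trans hs.symm) hsne
                  · rfl
                rw [this]
                constructor <;> simp <;> linarith
            · simp only [ha, hb, if_neg hli]
              cases q.2.1 <;> simp <;> constructor <;> linarith
          · rw [if_neg hl]
            simp only [ha, hb]
            have hk' : (0:ℝ) ≤ (k:ℝ) := by positivity
            by_cases hli : l = i <;> cases s <;> simp [hli] <;> linarith
        · simp only [Finset.coe_image, Set.mem_image, Finset.mem_coe]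
          exact ⟨q, Finset.mem_univ q, rfl⟩
      have hfinite : ({x : EuclideanSpace ℝ (Fin d) | ∀ l, a l ≤ x l ∧ x l ≤ b l} ∩
          ↑(Finset.univ.image f)).Finite :=
        Set.Finite.inter_of_right (Finset.finite_toSet _) _
      have hcard : Q.card = 2 * d * k - k := by
        have h1 : (Finset.univ.filter (fun q : Fin d × Bool × Fin k =>
            q.1 = i ∧ q.2.1 = s)) = {i} ×ˢ ({s} ×ˢ Finset.univ) := by
          ext ⟨i', s', j'⟩
          simp only [Finset.mem_filter, Finset.mem_univ, true_and, Finset.mem_product,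
            Finset.mem_singleton]
          tauto
        have h2 : (Finset.univ.filter (fun q : Fin d × Bool × Fin k =>
            q.1 = i ∧ q.2.1 = s)).card = k := by
          rw [h1]; simp
        have h3 := Finset.card_filter_add_card_filter_not
          (s := (Finset.univ : Finset (Fin d × Bool × Fin k)))
          (p := fun q => q.1 = i ∧ q.2.1 = s)
        have h4 : (Finset.univ : Finset (Fin d × Bool × Fin k)).card = 2 * d * k := by
          simp only [Finset.card_univ, Fintype.card_prod, Fintype.card_fin, Fintype.card_bool]
          ring
        rw [hQ] at *
        omega
      have hQcard : (Q.image f).card = 2 * d * k - k := by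
        rw [Finset.card_image_of_injective _ hinj, hcard]
      calc (2 * d - 1) * k ≤ 2 * d * k - k := by
            rw [Nat.sub_mul, one_mul]
        _ = (Q.image f).card := hQcard.symm
        _ = (↑(Q.image f) : Set _).ncard := (Set.ncard_coe_finset _).symm
        _ ≤ _ := Set.ncard_le_ncard hsub hfinite
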